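/- Let Γ be a connected finite directed graph without self-loops with vertex set {1,…,N}, N ≥ 2, and let Γ'₁ ⊆ Γ₁ be a nonempty edge subset. Fix positive reals ξ_e for e ∈ Γ'₁ and s_e for e ∈ Γ₁ ∖ Γ'₁, and for ρ > 0 define weights t_e(ρ) = ρ ξ_e if e ∈ Γ'₁ and t_e(ρ) = s_e otherwise. Then for all 1 ≤ i, j ≤ N−1, the function ρ ↦ (M_Γ(t(ρ))^{−1})_{ij}, defined on (0, ∞), extends to a function on [0, ∞) that is C^∞ (smooth) on [0, ∞). -/

import Mathlib

open Finset

/-- Reachability between vertices generated by (the endpoints of) the edges in `S`: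
the equivalence relation generated by the pairs `(h e, t e)`, `e ∈ S`. -/
def Reach {V E : Type*} (hm tm : E → V) (S : Set E) : V → V → Prop :=
  Relation.EqvGen fun a b => ∃ e ∈ S, hm e = a ∧ tm e = b

/-- Incidence matrix entry: `1` if `i` is the head of `e`, `-1` if it is the tail,
`0` otherwise. -/
def inc {V E : Type*} [DecidableEq V] (hm tm : E → V) (e : E) (i : V) : ℝ :=
  if hm e = i then 1 else if tm e = i then -1 else 0

/-- Reduced weighted Laplacian `M_Γ(t)_{ij} = ∑_e ρ^e_i ρ^e_j / t_e`,
indexed by the first `n` of the `n + 1` vertices. -/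
noncomputable def lap {n : ℕ} {E : Type*} [Fintype E] (hm tm : E → Fin (n + 1))
    (w : E → ℝ) : Matrix (Fin n) (Fin n) ℝ :=
  Matrix.of fun i j => ∑ e, inc hm tm e i.castSucc * inc hm tm e j.castSucc / w e

/-- `T` is a spanning tree: it has `N - 1` edges and connects all vertices. -/
def IsSpanningTree {n : ℕ} {E : Type*} [Fintype E] (hm tm : E → Fin (n + 1))
    (T : Finset E) : Prop :=
  T.card = n ∧ ∀ a b : Fin (n + 1), Reach hm tm (↑T) a b

open Matrix

/-- extension of a vector by `0` at the last vertex -/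
def pad {n : ℕ} (x : Fin n → ℝ) : Fin (n + 1) → ℝ := Fin.snoc x 0

@[simp] lemma pad_castSucc {n : ℕ} (x : Fin n → ℝ) (i : Fin n) :
    pad x i.castSucc = x i := Fin.snoc_castSucc _ _ _

@[simp] lemma pad_last {n : ℕ} (x : Fin n → ℝ) : pad x (Fin.last n) = 0 :=
  Fin.snoc_last _ _

set_option linter.unusedSectionVars false
section Aux

variable {n : ℕ} {E : Type*} [Fintype E] (hm tm : E → Fin (n + 1))

lemma inc_eq_sub {e : E} (hl : hm e ≠ tm e) (v : Fin (n+1)) :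
    inc hm tm e v = (if hm e = v then (1:ℝ) else 0) - (if tm e = v then 1 else 0) := by
  unfold inc
  by_cases h1 : hm e = v
  · have h2 : ¬ tm e = v := fun h => hl (h1.trans h.symm)
    simp [h1, h2]
  · by_cases h2 : tm e = v <;> simp [h1, h2]

lemma dsum {e : E} (hl : hm e ≠ tm e) (x : Fin n → ℝ) :
    ∑ i : Fin n, x i * inc hm tm e i.castSucc = pad x (hm e) - pad x (tm e) := by
  have h1 : ∑ i : Fin n, x i * inc hm tm e i.castSucc
      = ∑ v : Fin (n+1), pad x v * inc hm tm e v := by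
    rw [Fin.sum_univ_castSucc]
    simp
  rw [h1]
  have h2 : ∀ v : Fin (n+1), pad x v * inc hm tm e v
      = (if hm e = v then pad x v else 0) - (if tm e = v then pad x v else 0) := by
    intro v
    rw [inc_eq_sub hm tm hl, mul_sub]
    by_cases h1 : hm e = v <;> by_cases h2 : tm e = v <;> simp [h1, h2]
  simp only [h2]
  rw [Finset.sum_sub_distrib, Finset.sum_ite_eq, Finset.sum_ite_eq]
  simp

lemma quad (hl : ∀ e, hm e ≠ tm e) (w : E → ℝ) (x : Fin n → ℝ) :
    x ⬝ᵥ (lap hm tm w).mulVec x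
      = ∑ e, (pad x (hm e) - pad x (tm e))^2 / w e := by
  unfold dotProduct Matrix.mulVec lap
  simp only [Matrix.of_apply, dotProduct]
  have : ∀ i : Fin n, x i * ∑ j, (∑ e, inc hm tm e i.castSucc * inc hm tm e j.castSucc / w e) * x j
      = ∑ e, x i * inc hm tm e i.castSucc * ((∑ j, x j * inc hm tm e j.castSucc) / w e) := by
    intro i
    rw [Finset.mul_sum]
    have h : ∀ j : Fin n, x i * ((∑ e, inc hm tm e i.castSucc * inc hm tm e j.castSucc / w e) * x j)
        = ∑ e, x i * inc hm tm e i.castSucc * (x j * inc hm tm e j.castSucc / w e) := by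
      intro j
      rw [Finset.sum_mul, Finset.mul_sum]
      congr 1; ext e
      ring
    simp only [h]
    rw [Finset.sum_comm]
    congr 1; ext e
    rw [Finset.sum_div, Finset.mul_sum]
  simp only [this]
  rw [Finset.sum_comm]
  congr 1; ext e
  rw [← Finset.sum_mul, dsum hm tm (hl e)]
  ring

lemma lap_posdef (hconn : ∀ a b : Fin (n + 1), Reach hm tm Set.univ a b)
    (hl : ∀ e, hm e ≠ tm e) (w : E → ℝ) (hw : ∀ e, 0 < w e) :
    (lap hm tm w).PosDef := by
  refine Matrix.PosDef.of_dotProduct_mulVec_pos ?_ ?_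
  · ext i j
    simp only [Matrix.conjTranspose_apply, lap, Matrix.of_apply, star_trivial]
    congr 1; ext e; ring
  · intro x hx
    simp only [star_trivial]
    rw [quad hm tm hl w x]
    have hnonneg : ∀ e ∈ Finset.univ (α := E),
        0 ≤ (pad x (hm e) - pad x (tm e))^2 / w e :=
      fun e _ => div_nonneg (sq_nonneg _) (hw e).le
    rcases lt_or_eq_of_le (Finset.sum_nonneg hnonneg) with h | h
    · exact h
    · exfalso
      have hall := (Finset.sum_eq_zero_iff_of_nonneg hnonneg).mp h.symm
      have hedge : ∀ e : E, pad x (hm e) = pad x (tm e) := by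
        intro e
        have := hall e (Finset.mem_univ e)
        field_simp [(hw e).ne'] at this
        linarith [(pow_eq_zero_iff (n := 2) two_ne_zero).mp (this.trans (mul_zero _))]
      have hreach : ∀ a b : Fin (n+1), Reach hm tm Set.univ a b → pad x a = pad x b := by
        intro a b h
        induction h with
        | rel a b h => obtain ⟨e, -, rfl, rfl⟩ := h; exact hedge e
        | refl a => rfl
        | symm a b _ ih => exact ih.symm
        | trans a b c _ _ ih1 ih2 => exact ih1.trans ih2
      apply hx
      funext i
      have := hreach i.castSucc (Fin.last n) (hconn _ _)
      simpa using this

lemma lap_det_ne_zero (hconn : ∀ a b : Fin (n + 1), Reach hm tm Set.univ a b)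
    (hl : ∀ e, hm e ≠ tm e) (w : E → ℝ) (hw : ∀ e, 0 < w e) :
    (lap hm tm w).det ≠ 0 :=
  (lap_posdef hm tm hconn hl w hw).det_pos.ne'

lemma posdef_bound {M : Matrix (Fin n) (Fin n) ℝ} (hn : 1 ≤ n) (hM : M.PosDef) :
    ∃ c > 0, ∀ x : Fin n → ℝ, c * ‖x‖^2 ≤ x ⬝ᵥ M.mulVec x := by
  have hnt : Nontrivial (Fin n → ℝ) := by
    refine ⟨0, (fun _ => 1), fun h => ?_⟩
    have := congrFun h ⟨0, hn⟩
    simp at this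
  have hf : Continuous fun x : Fin n → ℝ => x ⬝ᵥ M.mulVec x := by
    unfold dotProduct Matrix.mulVec
    dsimp [dotProduct]
    exact continuous_finset_sum _ fun i _ => (continuous_apply i).mul
      (continuous_finset_sum _ fun j _ => continuous_const.mul (continuous_apply j))
  have hsph : (Metric.sphere (0 : Fin n → ℝ) 1).Nonempty :=
    NormedSpace.sphere_nonempty.mpr zero_le_one
  obtain ⟨x₀, hx₀s, hmin'⟩ := (isCompact_sphere (0 : Fin n → ℝ) 1).exists_isMinOn hsph
    hf.continuousOn
  have hmin := isMinOn_iff.mp hmin'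
  have hx₀norm : ‖x₀‖ = 1 := by simpa using mem_sphere_zero_iff_norm.mp hx₀s
  have hx₀ne : x₀ ≠ 0 := by
    intro h; rw [h] at hx₀norm; simp at hx₀norm
  have hscale : ∀ (r : ℝ) (y : Fin n → ℝ),
      (r • y) ⬝ᵥ M.mulVec (r • y) = r^2 * (y ⬝ᵥ M.mulVec y) := by
    intro r y
    rw [Matrix.mulVec_smul, dotProduct_smul, smul_dotProduct]
    simp [smul_eq_mul]; ring
  refine ⟨x₀ ⬝ᵥ M.mulVec x₀, ?_, ?_⟩
  · have := hM.dotProduct_mulVec_pos hx₀ne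
    simpa using this
  · intro x
    rcases eq_or_ne x 0 with rfl | hxne
    · simp
    · have hxn : ‖x‖ ≠ 0 := norm_ne_zero_iff.mpr hxne
      set u : Fin n → ℝ := ‖x‖⁻¹ • x with hu
      have hun : ‖u‖ = 1 := by
        rw [hu, norm_smul]
        simp [abs_of_nonneg (inv_nonneg.mpr (norm_nonneg x)), inv_mul_cancel₀ hxn]
      have husph : u ∈ Metric.sphere (0 : Fin n → ℝ) 1 :=
        mem_sphere_zero_iff_norm.mpr hun
      have hux : x = ‖x‖ • u := by
        rw [hu, smul_smul, mul_inv_cancel₀ hxn, one_smul]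
      have := hmin u husph
      have hx2 : x ⬝ᵥ M.mulVec x = ‖x‖^2 * (u ⬝ᵥ M.mulVec u) := by
        conv_lhs => rw [hux]
        rw [hscale]
      rw [hx2, mul_comm (x₀ ⬝ᵥ M.mulVec x₀)]
      exact mul_le_mul_of_nonneg_left this (sq_nonneg _)

end Aux

lemma contDiff_polyeval (p : Polynomial ℝ) :
    ContDiff ℝ (⊤ : ℕ∞) fun x : ℝ => p.eval x := by
  have h : (fun x : ℝ => p.eval x)
      = fun x => ∑ k ∈ Finset.range (p.natDegree + 1), p.coeff k * x ^ k :=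
    funext fun x => Polynomial.eval_eq_sum_range (p := p) x
  rw [h]
  exact ContDiff.sum fun k _ => contDiff_const.mul (contDiff_id.pow k)

-- For weights `t_e(ρ) = ρ ξ_e` on `Γ'₁` and `t_e(ρ) = s_e` elsewhere, each entry
-- `ρ ↦ (M_Γ(t(ρ))⁻¹)_{ij}`, defined for `ρ > 0`, extends to a function that is
-- `C^∞` on `[0, ∞)`.
theorem lap_inverse_smooth_extension {n : ℕ} (hn : 1 ≤ n) {E : Type*}
    [Fintype E] [DecidableEq E]
    (hm tm : E → Fin (n + 1))
    (hconn : ∀ a b : Fin (n + 1), Reach hm tm Set.univ a b)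
    (hloop : ∀ e, hm e ≠ tm e)
    (S : Finset E) (hS : S.Nonempty)
    (ξ s : E → ℝ) (hξ : ∀ e, 0 < ξ e) (hs : ∀ e, 0 < s e)
    (i j : Fin n) :
    ∃ g : ℝ → ℝ, ContDiffOn ℝ (⊤ : ℕ∞) g (Set.Ici 0) ∧
      ∀ ρ : ℝ, 0 < ρ →
        g ρ = (lap hm tm fun e => if e ∈ S then ρ * ξ e else s e)⁻¹ i j := by
  classical
  set t : ℝ → E → ℝ := fun ρ e => if e ∈ S then ρ * ξ e else s e with ht
  set A : Matrix (Fin n) (Fin n) ℝ := Matrix.of fun i' j' =>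
    ∑ e ∈ S, inc hm tm e i'.castSucc * inc hm tm e j'.castSucc / ξ e with hA
  set B : Matrix (Fin n) (Fin n) ℝ := Matrix.of fun i' j' =>
    ∑ e ∈ Sᶜ, inc hm tm e i'.castSucc * inc hm tm e j'.castSucc / s e with hB
  have htpos : ∀ ρ : ℝ, 0 < ρ → ∀ e, 0 < t ρ e := by
    intro ρ hρ e
    by_cases he : e ∈ S <;> simp [ht, he, mul_pos hρ (hξ e), hs e]
  have hN : ∀ ρ : ℝ, ρ ≠ 0 → ρ • lap hm tm (t ρ) = A + ρ • B := by
    intro ρ hρ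
    ext i' j'
    simp only [Matrix.smul_apply, Matrix.add_apply, lap, Matrix.of_apply, smul_eq_mul, hA, hB]
    rw [Finset.mul_sum,
      ← Finset.sum_add_sum_compl S
        (fun e => ρ * (inc hm tm e i'.castSucc * inc hm tm e j'.castSucc / t ρ e)),
      Finset.mul_sum]
    congr 1
    · refine Finset.sum_congr rfl fun e he => ?_
      simp only [ht, if_pos he]
      rw [mul_div_assoc', mul_div_mul_left _ _ hρ]
    · refine Finset.sum_congr rfl fun e he => ?_
      have he' : e ∉ S := Finset.mem_compl.mp he
      simp only [ht, if_neg he']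
  have hposdef : ∀ ρ : ℝ, 0 < ρ → (lap hm tm (t ρ)).PosDef := fun ρ hρ =>
    lap_posdef hm tm hconn hloop _ (htpos ρ hρ)
  have hdet : ∀ ρ : ℝ, 0 < ρ → (lap hm tm (t ρ)).det ≠ 0 := fun ρ hρ =>
    (hposdef ρ hρ).det_pos.ne'
  -- polynomial matrix
  set Pm : Matrix (Fin n) (Fin n) (Polynomial ℝ) := Matrix.of fun i' j' =>
    Polynomial.C (A i' j') + Polynomial.C (B i' j') * Polynomial.X with hPm
  have hmap : ∀ ρ : ℝ, Pm.map (Polynomial.evalRingHom ρ) = A + ρ • B := by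
    intro ρ
    ext i' j'
    simp only [hPm, Matrix.map_apply, Matrix.of_apply, Polynomial.coe_evalRingHom,
      Polynomial.eval_add, Polynomial.eval_mul, Polynomial.eval_C, Polynomial.eval_X,
      Matrix.add_apply, Matrix.smul_apply, smul_eq_mul]
    ring
  set Qp : Polynomial ℝ := Pm.det with hQp
  set Rp : Polynomial ℝ := Polynomial.X * Pm.adjugate i j with hRp
  have hQeval : ∀ ρ : ℝ, Qp.eval ρ = (A + ρ • B).det := by
    intro ρ
    have h := RingHom.map_det (Polynomial.evalRingHom ρ) Pm
    rw [hQp]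
    rw [show (Polynomial.evalRingHom ρ) Pm.det = Polynomial.eval ρ Pm.det from rfl] at h
    rw [h]
    congr 1
    rw [← hmap ρ]
    rfl
  have hReval : ∀ ρ : ℝ, Rp.eval ρ = ρ * (A + ρ • B).adjugate i j := by
    intro ρ
    rw [hRp, Polynomial.eval_mul, Polynomial.eval_X]
    congr 1
    have h := RingHom.map_adjugate (Polynomial.evalRingHom ρ) Pm
    have h2 : ((Polynomial.evalRingHom ρ).mapMatrix Pm.adjugate) i j
        = Polynomial.eval ρ (Pm.adjugate i j) := rfl
    rw [← h2, h]
    rw [show (Polynomial.evalRingHom ρ).mapMatrix Pm = Pm.map (Polynomial.evalRingHom ρ) from rfl,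
      hmap ρ]
  have hNdet : ∀ ρ : ℝ, 0 < ρ → (A + ρ • B).det ≠ 0 := by
    intro ρ hρ
    rw [← hN ρ hρ.ne', Matrix.det_smul]
    simp only [Fintype.card_fin]
    exact mul_ne_zero (pow_ne_zero _ hρ.ne') (hdet ρ hρ)
  have hQne : ∀ ρ : ℝ, 0 < ρ → Qp.eval ρ ≠ 0 := by
    intro ρ hρ
    rw [hQeval]
    exact hNdet ρ hρ
  have hQp0 : Qp ≠ 0 := by
    intro h
    exact hQne 1 one_pos (by rw [h]; simp)
  -- entry formula
  have hg0 : ∀ ρ : ℝ, 0 < ρ → (lap hm tm (t ρ))⁻¹ i j = Rp.eval ρ / Qp.eval ρ := by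
    intro ρ hρ
    have hρ0 : ρ ≠ 0 := hρ.ne'
    have hML : lap hm tm (t ρ) = ρ⁻¹ • (A + ρ • B) := by
      rw [← hN ρ hρ0, smul_smul, inv_mul_cancel₀ hρ0, one_smul]
    rw [Matrix.inv_def, hML, Matrix.det_smul, Matrix.adjugate_smul]
    simp only [Fintype.card_fin, Matrix.smul_apply, smul_eq_mul]
    rw [Ring.inverse_eq_inv']
    rw [hReval ρ, hQeval ρ]
    have hdn : (A + ρ • B).det ≠ 0 := hNdet ρ hρ
    have hnn : n - 1 + 1 = n := Nat.succ_pred_eq_of_pos hn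
    rw [inv_pow, inv_pow]
    rw [mul_inv, inv_inv]
    field_simp
    have hpow : ρ ^ n = ρ ^ (n - 1) * ρ := by
      conv_lhs => rw [← hnn]
      rw [pow_succ]
    rw [hpow]
    ring
  -- boundedness
  obtain ⟨c, hc, hcb⟩ := posdef_bound hn (hposdef 1 one_pos)
  have hbound : ∀ ρ : ℝ, 0 < ρ → ρ ≤ 1 → |(lap hm tm (t ρ))⁻¹ i j| ≤ 1 / c := by
    intro ρ hρ hρ1
    have hu : IsUnit (lap hm tm (t ρ)).det := (hdet ρ hρ).isUnit
    set y : Fin n → ℝ := (lap hm tm (t ρ))⁻¹.mulVec (Pi.single j 1) with hy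
    have hMy : (lap hm tm (t ρ)).mulVec y = Pi.single j 1 := by
      rw [hy, Matrix.mulVec_mulVec, Matrix.mul_nonsing_inv _ hu, Matrix.one_mulVec]
    have hyMy : y ⬝ᵥ (lap hm tm (t ρ)).mulVec y = y j := by
      rw [hMy, dotProduct_single, mul_one]
    have hmono : y ⬝ᵥ (lap hm tm (t 1)).mulVec y ≤ y ⬝ᵥ (lap hm tm (t ρ)).mulVec y := by
      rw [quad hm tm hloop, quad hm tm hloop]
      refine Finset.sum_le_sum fun e _ => ?_
      refine div_le_div_of_nonneg_left (sq_nonneg _) (htpos ρ hρ e) ?_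
      by_cases he : e ∈ S
      · simp only [ht, if_pos he]
        nlinarith [hξ e]
      · simp [ht, if_neg he, le_refl]
    have h1 : c * ‖y‖^2 ≤ y j := by
      calc c * ‖y‖^2 ≤ y ⬝ᵥ (lap hm tm (t 1)).mulVec y := hcb y
        _ ≤ y ⬝ᵥ (lap hm tm (t ρ)).mulVec y := hmono
        _ = y j := hyMy
    have h2 : y j ≤ ‖y‖ := by
      calc y j ≤ |y j| := le_abs_self _
        _ = ‖y j‖ := (Real.norm_eq_abs _).symm
        _ ≤ ‖y‖ := norm_le_pi_norm y j
    have h3 : c * ‖y‖^2 ≤ ‖y‖ := h1.trans h2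
    have hynorm : ‖y‖ ≤ 1 / c := by
      by_contra hcon
      push_neg at hcon
      have hy0 : 0 < ‖y‖ := lt_of_le_of_lt (by positivity) hcon
      have h4 : 1 < ‖y‖ * c := (div_lt_iff₀ hc).mp hcon
      nlinarith [h3, hy0, h4]
    have hentry : (lap hm tm (t ρ))⁻¹ i j = y i := by
      rw [hy, Matrix.mulVec_single]
      simp
    rw [hentry]
    calc |y i| = ‖y i‖ := (Real.norm_eq_abs _).symm
      _ ≤ ‖y‖ := norm_le_pi_norm y i
      _ ≤ 1 / c := hynorm
  -- final polynomial argument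
  by_cases hRp0 : Rp = 0
  · refine ⟨0, contDiffOn_const, fun ρ hρ => ?_⟩
    rw [hg0 ρ hρ, hRp0]
    simp
  · set a := Rp.rootMultiplicity 0 with ha
    set b := Qp.rootMultiplicity 0 with hb
    set R1 : Polynomial ℝ := Rp /ₘ (Polynomial.X - Polynomial.C 0) ^ a with hR1def
    set Q1 : Polynomial ℝ := Qp /ₘ (Polynomial.X - Polynomial.C 0) ^ b with hQ1def
    have hR10 : R1.eval 0 ≠ 0 :=
      Polynomial.eval_divByMonic_pow_rootMultiplicity_ne_zero 0 hRp0
    have hQ10 : Q1.eval 0 ≠ 0 :=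
      Polynomial.eval_divByMonic_pow_rootMultiplicity_ne_zero 0 hQp0
    have hRfac : ∀ ρ : ℝ, Rp.eval ρ = ρ ^ a * R1.eval ρ := by
      intro ρ
      conv_lhs => rw [← Polynomial.pow_mul_divByMonic_rootMultiplicity_eq Rp 0]
      rw [Polynomial.eval_mul, Polynomial.eval_pow, Polynomial.eval_sub, Polynomial.eval_X,
        Polynomial.eval_C, sub_zero]
    have hQfac : ∀ ρ : ℝ, Qp.eval ρ = ρ ^ b * Q1.eval ρ := by
      intro ρ
      conv_lhs => rw [← Polynomial.pow_mul_divByMonic_rootMultiplicity_eq Qp 0]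
      rw [Polynomial.eval_mul, Polynomial.eval_pow, Polynomial.eval_sub, Polynomial.eval_X,
        Polynomial.eval_C, sub_zero]
    have hQ1ne : ∀ ρ : ℝ, 0 ≤ ρ → Q1.eval ρ ≠ 0 := by
      intro ρ hρ
      rcases hρ.eq_or_lt with h | h
      · rw [← h]; exact hQ10
      · intro h0
        apply hQne ρ h
        rw [hQfac, h0, mul_zero]
    have hba : b ≤ a := by
      by_contra hba
      push_neg at hba
      set φ : ℝ → ℝ := fun ρ => R1.eval ρ / Q1.eval ρ with hφ
      have hφcont : ContinuousAt φ 0 :=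
        ((contDiff_polyeval R1).continuous.continuousAt).div
          ((contDiff_polyeval Q1).continuous.continuousAt) hQ10
      have hlim1 : Filter.Tendsto φ (nhdsWithin 0 (Set.Ioi 0))
          (nhds (R1.eval 0 / Q1.eval 0)) :=
        (hφcont.tendsto).mono_left nhdsWithin_le_nhds
      have hφeq : ∀ ρ : ℝ, 0 < ρ → φ ρ = ρ ^ (b - a) * (Rp.eval ρ / Qp.eval ρ) := by
        intro ρ hρ
        have hρ0 : ρ ≠ 0 := hρ.ne'
        obtain ⟨k, hk⟩ : ∃ k, b = k + a := ⟨b - a, by omega⟩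
        have hk2 : b - a = k := by omega
        rw [hφ, hRfac, hQfac, hk2, hk, pow_add]
        have hQ1' : Q1.eval ρ ≠ 0 := hQ1ne ρ hρ.le
        field_simp
      have hBnd : ∀ᶠ ρ in nhdsWithin 0 (Set.Ioi 0), ‖φ ρ‖ ≤ (1 / c) * ρ := by
        filter_upwards [Ioo_mem_nhdsGT (zero_lt_one : (0:ℝ) < 1)] with ρ hρ
        obtain ⟨hρ0, hρ1⟩ := hρ
        rw [hφeq ρ hρ0]
        have hg : |Rp.eval ρ / Qp.eval ρ| ≤ 1 / c := by
          rw [← hg0 ρ hρ0]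
          exact hbound ρ hρ0 hρ1.le
        have hpow : ρ ^ (b - a) ≤ ρ := by
          calc ρ ^ (b - a) ≤ ρ ^ 1 := by
                apply pow_le_pow_of_le_one hρ0.le hρ1.le
                omega
            _ = ρ := pow_one ρ
        rw [Real.norm_eq_abs, abs_mul, abs_of_pos (pow_pos hρ0 _)]
        calc ρ ^ (b - a) * |Rp.eval ρ / Qp.eval ρ| ≤ ρ ^ (b - a) * (1 / c) :=
              mul_le_mul_of_nonneg_left hg (pow_pos hρ0 _).le
          _ ≤ ρ * (1 / c) := mul_le_mul_of_nonneg_right hpow (by positivity)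
          _ = (1 / c) * ρ := mul_comm _ _
      have hlim2 : Filter.Tendsto φ (nhdsWithin 0 (Set.Ioi 0)) (nhds 0) := by
        apply squeeze_zero_norm' hBnd
        have : Filter.Tendsto (fun ρ : ℝ => (1 / c) * ρ) (nhds 0) (nhds ((1/c) * 0)) :=
          (continuous_const.mul continuous_id).tendsto 0
        rw [mul_zero] at this
        exact this.mono_left nhdsWithin_le_nhds
      have := tendsto_nhds_unique hlim1 hlim2
      exact div_ne_zero hR10 hQ10 this
    refine ⟨fun ρ => ρ ^ (a - b) * R1.eval ρ / Q1.eval ρ, ?_, ?_⟩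
    · apply ContDiffOn.div
      · exact ((contDiff_id.pow _).mul (contDiff_polyeval R1)).contDiffOn
      · exact (contDiff_polyeval Q1).contDiffOn
      · exact fun ρ hρ => hQ1ne ρ hρ
    · intro ρ hρ
      have hρ0 : ρ ≠ 0 := hρ.ne'
      obtain ⟨k, hk⟩ : ∃ k, a = k + b := ⟨a - b, by omega⟩
      have hk2 : a - b = k := by omega
      beta_reduce
      rw [hg0 ρ hρ, hRfac, hQfac, hk2, hk, pow_add]
      have hQ1' : Q1.eval ρ ≠ 0 := hQ1ne ρ hρ.le
      field_simp
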